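/- Let k be a field and let A be a commutative k-algebra graded by the additive group M = ℤ^r. Let h : A → k be a k-algebra homomorphism. Suppose there exist v_1, …, v_r ∈ M generating M = ℤ^r as a group, such that for each j there exist an integer n_j > 0 and an element a ∈ A_{n_j • v_j} with h(a) ≠ 0. Then the group of characters λ : ℤ^r → kˣ satisfying λ(m) · h(a) = h(a) for every m ∈ M and every a ∈ A_m is a finite group. -/

import Mathlib

/-- The finite-stabilizer claim in the proof of Proposition 2.9 of Hu–Keel,
"Mori Dream Spaces and GIT".  Let `A` be a commutative `k`-algebra graded by `M = ℤ^r` and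
`h : A → k` a `k`-algebra homomorphism.  Suppose `v₁, …, v_r` generate `ℤ^r` as a group and
for each `j` there are `n_j > 0` and `a ∈ A_{n_j • v_j}` with `h a ≠ 0`.  Then the group of
characters `λ : ℤ^r → kˣ` fixing `h` (i.e. with `λ m • h a = h a` for all `m` and all
`a ∈ A_m`) is finite. -/
theorem finite_stabilizer_of_semistable_for_generating_characters
    {k A : Type*} [Field k] [CommRing A] [Algebra k A]
    {r : ℕ} (𝒜 : (Fin r → ℤ) → Submodule k A) [GradedAlgebra 𝒜]
    (h : A →ₐ[k] k)
    (v : Fin r → (Fin r → ℤ))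
    (hgen : AddSubgroup.closure (Set.range v) = ⊤)
    (hss : ∀ j : Fin r, ∃ n : ℕ, 0 < n ∧ ∃ a ∈ 𝒜 (n • v j), h a ≠ 0) :
    {χ : Multiplicative (Fin r → ℤ) →* kˣ |
      ∀ (m : Fin r → ℤ), ∀ a ∈ 𝒜 m,
        (χ (Multiplicative.ofAdd m) : k) * h a = h a}.Finite := by
  classical
  choose n hn a ha hha using hss
  set S : Set (Multiplicative (Fin r → ℤ) →* kˣ) :=
    {χ | ∀ (m : Fin r → ℤ), ∀ a ∈ 𝒜 m,
        (χ (Multiplicative.ofAdd m) : k) * h a = h a} with hS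
  -- key: χ(v j) ^ (n j) = 1 for χ ∈ S
  have key : ∀ χ ∈ S, ∀ j, χ (Multiplicative.ofAdd (v j)) ^ n j = 1 := by
    intro χ hχ j
    have h1 : (χ (Multiplicative.ofAdd ((n j) • v j)) : k) * h (a j) = h (a j) :=
      hχ _ _ (ha j)
    have h2 : (χ (Multiplicative.ofAdd ((n j) • v j)) : k) = 1 :=
      mul_right_cancel₀ (hha j) (h1.trans (one_mul _).symm)
    have h3 : χ (Multiplicative.ofAdd ((n j) • v j)) = 1 := Units.ext h2
    rw [← h3, ← map_pow]
    exact congrArg χ (ofAdd_nsmul (n j) (v j)).symm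
  -- injectivity on S of evaluation at the generators
  have inj : Set.InjOn (fun χ : Multiplicative (Fin r → ℤ) →* kˣ =>
      fun j => χ (Multiplicative.ofAdd (v j))) S := by
    intro χ₁ _ χ₂ _ hval
    let T : AddSubgroup (Fin r → ℤ) :=
      { carrier := {m | χ₁ (Multiplicative.ofAdd m) = χ₂ (Multiplicative.ofAdd m)}
        zero_mem' := by simp
        add_mem' := by
          intro x y hx hy
          have hx' : χ₁ (Multiplicative.ofAdd x) = χ₂ (Multiplicative.ofAdd x) := hx
          have hy' : χ₁ (Multiplicative.ofAdd y) = χ₂ (Multiplicative.ofAdd y) := hy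
          show χ₁ (Multiplicative.ofAdd (x + y)) = χ₂ (Multiplicative.ofAdd (x + y))
          rw [ofAdd_add, map_mul, map_mul, hx', hy']
        neg_mem' := by
          intro x hx
          have hx' : χ₁ (Multiplicative.ofAdd x) = χ₂ (Multiplicative.ofAdd x) := hx
          show χ₁ (Multiplicative.ofAdd (-x)) = χ₂ (Multiplicative.ofAdd (-x))
          rw [ofAdd_neg, map_inv, map_inv, hx'] }
    have hT : AddSubgroup.closure (Set.range v) ≤ T := by
      rw [AddSubgroup.closure_le]
      rintro _ ⟨j, rfl⟩
      exact congrFun hval j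
    rw [hgen] at hT
    refine MonoidHom.ext fun m => Units.ext ?_
    exact congrArg Units.val (hT (AddSubgroup.mem_top (Multiplicative.toAdd m)))
  -- image is contained in a finite set
  have himg : (fun χ : Multiplicative (Fin r → ℤ) →* kˣ =>
      fun j => χ (Multiplicative.ofAdd (v j))) '' S ⊆
      Set.pi Set.univ (fun j => {u : kˣ | u ^ n j = 1}) := by
    rintro _ ⟨χ, hχ, rfl⟩ j _
    exact key χ hχ j
  have hfin : (Set.pi Set.univ (fun j => {u : kˣ | u ^ n j = 1})).Finite := by
    apply Set.Finite.pi
    intro j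
    haveI : NeZero (n j) := ⟨(hn j).ne'⟩
    have hfin' : (Set.range (fun x : rootsOfUnity (n j) k => (x : kˣ))).Finite :=
      Set.finite_range _
    apply hfin'.subset
    intro u hu
    exact ⟨⟨u, (mem_rootsOfUnity _ _).mpr hu⟩, rfl⟩
  exact Set.Finite.of_finite_image (hfin.subset himg) inj
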